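/- Let h, k be coprime integers with 1 ≤ h < k and let a, b be positive integers. Consider on ℂ⁴ the polynomials f₁ = h·z^k + k·w^h − (h+k)·x^a, f₂ = z·w − y^b, and f₃ = z^k − w^h, and let V = {f₁ = f₂ = 0} (the surface S_{h,k,a,b}) and W = V ∩ {f₃ = 0} (the ramification curve of F_{h,k,a,b}). Then [the Jacobian of (f₁,f₂) has rank 2 at every point of V, and the Jacobian of (f₁,f₂,f₃) has rank 3 at every point of W] if and only if h = a = b = 1. (That is, the cover and its ramification divisor are both smooth exactly when h = a = b = 1.) -/

import Mathlib

lemma auxFull {m : ℕ} (M : Matrix (Fin m) (Fin 4) ℂ) (c : Fin m → Fin 4)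
    (hdet : (M.submatrix id c).det ≠ 0) : M.rank = m := by
  refine le_antisymm (by simpa using M.rank_le_card_height) ?_
  have hE : M.submatrix id c
      = M * (Matrix.of fun i j => if i = c j then (1:ℂ) else 0) := by
    ext i j
    simp [Matrix.mul_apply, mul_ite, Finset.sum_ite_eq']
  have h1 := Matrix.rank_mul_le_left M (Matrix.of fun i j => if i = c j then (1:ℂ) else 0)
  rw [← hE] at h1
  have h2 : (M.submatrix id c).rank = m := by
    rw [Matrix.rank_of_isUnit _ ((Matrix.isUnit_iff_isUnit_det _).2 (isUnit_iff_ne_zero.2 hdet))]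
    simp
  omega

lemma auxP (M : Matrix (Fin 3) (Fin 4) ℂ) (P : Matrix (Fin 3) (Fin 2) ℂ)
    (N : Matrix (Fin 2) (Fin 4) ℂ) (hM : M = P * N) : M.rank ≤ 2 := by
  rw [hM]
  exact (Matrix.rank_mul_le_right _ _).trans (by simpa using N.rank_le_card_height)

lemma auxRow2 (M : Matrix (Fin 3) (Fin 4) ℂ) (hz : ∀ j, M 2 j = 0) : M.rank ≤ 2 := by
  refine auxP M ![![1,0],![0,1],![0,0]] (Matrix.of ![M 0, M 1]) ?_
  ext i j
  fin_cases i <;> erw [Matrix.mul_apply] <;> simp [Fin.sum_univ_two, hz]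

lemma auxRow1 (M : Matrix (Fin 3) (Fin 4) ℂ) (hz : ∀ j, M 1 j = 0) : M.rank ≤ 2 := by
  refine auxP M ![![1,0],![0,0],![0,1]] (Matrix.of ![M 0, M 2]) ?_
  ext i j
  fin_cases i <;> erw [Matrix.mul_apply] <;> simp [Fin.sum_univ_two, hz]

lemma auxRow0 (M : Matrix (Fin 3) (Fin 4) ℂ) (c : ℂ) (hz : ∀ j, M 0 j = c * M 2 j) :
    M.rank ≤ 2 := by
  refine auxP M ![![0,c],![1,0],![0,1]] (Matrix.of ![M 1, M 2]) ?_
  ext i j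
  fin_cases i <;> erw [Matrix.mul_apply] <;> simp [Fin.sum_univ_two, hz]

/-- For coprime integers `1 ≤ h < k` and positive integers `a, b`, the surface
`V = S_{h,k,a,b} = {f₁ = f₂ = 0}` and the ramification curve
`W = V ∩ {z^k = w^h}` of `F_{h,k,a,b}` are both smooth (the Jacobian of
`(f₁, f₂)` has rank 2 on `V` and the Jacobian of `(f₁, f₂, f₃)` has rank 3 on
`W`) if and only if `h = a = b = 1`. -/
theorem stmt_6 (h k a b : ℕ) (hh : 1 ≤ h) (hlt : h < k) (hcop : Nat.Coprime h k)
    (ha : 0 < a) (hb : 0 < b) :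
    ((∀ x y z w : ℂ,
        (h : ℂ) * z ^ k + (k : ℂ) * w ^ h = ((h : ℂ) + (k : ℂ)) * x ^ a →
        z * w = y ^ b →
        (Matrix.of
          ![![-(((h : ℂ) + (k : ℂ)) * (a : ℂ) * x ^ (a - 1)), 0,
              (h : ℂ) * (k : ℂ) * z ^ (k - 1), (k : ℂ) * (h : ℂ) * w ^ (h - 1)],
            ![0, -((b : ℂ) * y ^ (b - 1)), w, z]] :
          Matrix (Fin 2) (Fin 4) ℂ).rank = 2) ∧
      (∀ x y z w : ℂ,
        (h : ℂ) * z ^ k + (k : ℂ) * w ^ h = ((h : ℂ) + (k : ℂ)) * x ^ a →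
        z * w = y ^ b →
        z ^ k = w ^ h →
        (Matrix.of
          ![![-(((h : ℂ) + (k : ℂ)) * (a : ℂ) * x ^ (a - 1)), 0,
              (h : ℂ) * (k : ℂ) * z ^ (k - 1), (k : ℂ) * (h : ℂ) * w ^ (h - 1)],
            ![0, -((b : ℂ) * y ^ (b - 1)), w, z],
            ![0, 0, (k : ℂ) * z ^ (k - 1), -((h : ℂ) * w ^ (h - 1))]] :
          Matrix (Fin 3) (Fin 4) ℂ).rank = 3))
    ↔ (h = 1 ∧ a = 1 ∧ b = 1) := by
  have hk2 : 2 ≤ k := by omega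
  constructor
  · rintro ⟨-, hW⟩
    have e1 : (h : ℂ) * (0:ℂ) ^ k + (k : ℂ) * (0:ℂ) ^ h = ((h : ℂ) + (k : ℂ)) * (0:ℂ) ^ a := by
      rw [zero_pow (by omega), zero_pow (by omega), zero_pow (by omega)]; ring
    have e2 : (0:ℂ) * (0:ℂ) = (0:ℂ) ^ b := by rw [zero_pow (by omega)]; ring
    have e3 : (0:ℂ) ^ k = (0:ℂ) ^ h := by rw [zero_pow (by omega), zero_pow (by omega)]
    have hM := hW 0 0 0 0 e1 e2 e3
    set M0 : Matrix (Fin 3) (Fin 4) ℂ := Matrix.of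
      ![![-(((h : ℂ) + (k : ℂ)) * (a : ℂ) * (0:ℂ) ^ (a - 1)), 0,
          (h : ℂ) * (k : ℂ) * (0:ℂ) ^ (k - 1), (k : ℂ) * (h : ℂ) * (0:ℂ) ^ (h - 1)],
        ![0, -((b : ℂ) * (0:ℂ) ^ (b - 1)), 0, 0],
        ![0, 0, (k : ℂ) * (0:ℂ) ^ (k - 1), -((h : ℂ) * (0:ℂ) ^ (h - 1))]] with hM0
    have h1 : h = 1 := by
      by_contra hne
      have hle : M0.rank ≤ 2 := auxRow2 M0 (fun j => by
        fin_cases j <;>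
          simp [hM0, Matrix.vecHead, Matrix.vecTail, zero_pow (show k - 1 ≠ 0 by omega), zero_pow (show h - 1 ≠ 0 by omega)])
      omega
    have b1 : b = 1 := by
      by_contra hne
      have hle : M0.rank ≤ 2 := auxRow1 M0 (fun j => by
        fin_cases j <;> simp [hM0, Matrix.vecHead, Matrix.vecTail, zero_pow (show b - 1 ≠ 0 by omega)])
      omega
    have a1 : a = 1 := by
      by_contra hne
      have hle : M0.rank ≤ 2 := auxRow0 M0 (-(k : ℂ)) (fun j => by
        fin_cases j <;>
          simp [hM0, Matrix.vecHead, Matrix.vecTail, h1, zero_pow (show k - 1 ≠ 0 by omega),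
            zero_pow (show a - 1 ≠ 0 by omega)])
      omega
    exact ⟨h1, a1, b1⟩
  · rintro ⟨h1, a1, b1⟩
    subst h1; subst a1; subst b1
    have hk : ((1:ℂ) + (k:ℂ)) ≠ 0 := by
      have : ((1 + k : ℕ) : ℂ) ≠ 0 := Nat.cast_ne_zero.2 (by omega)
      push_cast at this; exact this
    constructor
    · intro x y z w _ _
      refine auxFull _ ![0, 1] ?_
      rw [Matrix.det_fin_two]
      simp [Matrix.submatrix_apply, hk]
    · intro x y z w _ _ _
      refine auxFull _ ![0, 1, 3] ?_
      rw [Matrix.det_fin_three]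
      simp [Matrix.submatrix_apply, Matrix.vecHead, Matrix.vecTail]
      intro hcon
      exact hk (by linear_combination -hcon)
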